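/- The ℂ-subalgebra of ℂ[u,v,w] generated by u^5, v^5, w^5 and uvw is isomorphic as a ℂ-algebra to ℂ[x,y,z,t]/(xyz − t^5), the quotient of the polynomial ring in four variables by the principal ideal generated by xyz − t^5 (the isomorphism sending x ↦ u^5, y ↦ v^5, z ↦ w^5, t ↦ uvw). -/

import Mathlib

open MvPolynomial

/-- The ideal `(xyz − t⁵)` of `ℂ[x,y,z,t]` (variables indexed by `Fin 4`). -/
noncomputable def toricIdeal : Ideal (MvPolynomial (Fin 4) ℂ) :=
  Ideal.span {(X 0 : MvPolynomial (Fin 4) ℂ) * X 1 * X 2 - X 3 ^ 5}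

/-- The subalgebra `ℂ[u⁵, v⁵, w⁵, uvw]` of `ℂ[u,v,w]` (variables indexed by `Fin 3`). -/
noncomputable def invariantAlgebra : Subalgebra ℂ (MvPolynomial (Fin 3) ℂ) :=
  Algebra.adjoin ℂ
    {(X 0 : MvPolynomial (Fin 3) ℂ) ^ 5, X 1 ^ 5, X 2 ^ 5, X 0 * X 1 * X 2}

/-- The generators `u⁵, v⁵, w⁵, uvw`. -/
noncomputable def tGen : Fin 4 → MvPolynomial (Fin 3) ℂ :=
  ![X 0 ^ 5, X 1 ^ 5, X 2 ^ 5, X 0 * X 1 * X 2]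

/-- The evaluation map `ℂ[x,y,z,t] → ℂ[u,v,w]`. -/
noncomputable def tPhi : MvPolynomial (Fin 4) ℂ →ₐ[ℂ] MvPolynomial (Fin 3) ℂ :=
  aeval tGen

/-- Image of an exponent vector under `tPhi` on monomials. -/
noncomputable def tEmb (d : Fin 4 →₀ ℕ) : Fin 3 →₀ ℕ :=
  Finsupp.equivFunOnFinite.symm ![5 * d 0 + d 3, 5 * d 1 + d 3, 5 * d 2 + d 3]

lemma tPhi_monomial (d : Fin 4 →₀ ℕ) (c : ℂ) :
    tPhi (monomial d c) = monomial (tEmb d) c := by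
  rw [tPhi, aeval_monomial, monomial_eq,
    Finsupp.prod_fintype _ _ (fun i => pow_zero _),
    Finsupp.prod_fintype _ _ (fun i => pow_zero _),
    Fin.prod_univ_four, Fin.prod_univ_three]
  simp only [tEmb, tGen, Finsupp.coe_equivFunOnFinite_symm,
    Matrix.cons_val_zero, Matrix.cons_val_one, Matrix.head_cons,
    Matrix.cons_val_two, Matrix.tail_cons, Matrix.cons_val_three,
    algebraMap_eq]
  rw [pow_add, pow_add, pow_add, pow_mul, pow_mul, pow_mul, mul_pow, mul_pow]
  ring

lemma tEmb_injOn {d e : Fin 4 →₀ ℕ} (hd : d 3 < 5) (he : e 3 < 5)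
    (h : tEmb d = tEmb e) : d = e := by
  have h0 := congrArg (fun f => f 0) h
  have h1 := congrArg (fun f => f 1) h
  have h2 := congrArg (fun f => f 2) h
  simp only [tEmb, Finsupp.coe_equivFunOnFinite_symm,
    Matrix.cons_val_zero, Matrix.cons_val_one, Matrix.head_cons,
    Matrix.cons_val_two, Matrix.tail_cons] at h0 h1 h2
  have h3 : d 3 = e 3 := by omega
  ext i
  fin_cases i
  · show d 0 = e 0; omega
  · show d 1 = e 1; omega
  · show d 2 = e 2; omega
  · show d 3 = e 3; omega

/-- Reduction of an exponent vector modulo `xyz - t⁵`. -/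
noncomputable def tRed (d : Fin 4 →₀ ℕ) : Fin 4 →₀ ℕ :=
  Finsupp.equivFunOnFinite.symm ![d 0 + d 3 / 5, d 1 + d 3 / 5, d 2 + d 3 / 5, d 3 % 5]

lemma tRed_three (d : Fin 4 →₀ ℕ) : tRed d 3 = d 3 % 5 := by
  simp [tRed, Finsupp.coe_equivFunOnFinite_symm]

lemma monomial_sub_tRed_mem (d : Fin 4 →₀ ℕ) (c : ℂ) :
    (monomial d c : MvPolynomial (Fin 4) ℂ) - monomial (tRed d) c ∈ toricIdeal := by
  obtain ⟨q, hq⟩ := sub_dvd_pow_sub_pow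
    ((X 0 : MvPolynomial (Fin 4) ℂ) * X 1 * X 2) (X 3 ^ 5) (d 3 / 5)
  rw [toricIdeal, Ideal.mem_span_singleton]
  refine ⟨-(C c * X 0 ^ d 0 * X 1 ^ d 1 * X 2 ^ d 2 * X 3 ^ (d 3 % 5) * q), ?_⟩
  rw [monomial_eq, monomial_eq,
    Finsupp.prod_fintype _ _ (fun i => pow_zero _),
    Finsupp.prod_fintype _ _ (fun i => pow_zero _),
    Fin.prod_univ_four, Fin.prod_univ_four]
  simp only [tRed, Finsupp.coe_equivFunOnFinite_symm,
    Matrix.cons_val_zero, Matrix.cons_val_one, Matrix.head_cons,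
    Matrix.cons_val_two, Matrix.tail_cons, Matrix.cons_val_three]
  rw [show (X 3 : MvPolynomial (Fin 4) ℂ) ^ d 3
      = (X 3 ^ 5) ^ (d 3 / 5) * X 3 ^ (d 3 % 5) by
    rw [← pow_mul, ← pow_add, Nat.div_add_mod]]
  rw [pow_add, pow_add, pow_add]
  linear_combination (-(C c * X 0 ^ d 0 * X 1 ^ d 1 * X 2 ^ d 2 * X 3 ^ (d 3 % 5))) * hq

lemma tReduce_exists (p : MvPolynomial (Fin 4) ℂ) :
    ∃ q : MvPolynomial (Fin 4) ℂ,
      p - q ∈ toricIdeal ∧ ∀ d ∈ q.support, d 3 < 5 := by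
  refine ⟨∑ d ∈ p.support, monomial (tRed d) (coeff d p), ?_, ?_⟩
  · have hrw : p - (∑ d ∈ p.support, monomial (tRed d) (coeff d p))
        = ∑ d ∈ p.support, (monomial d (coeff d p) - monomial (tRed d) (coeff d p)) := by
      rw [Finset.sum_sub_distrib, ← p.as_sum]
    rw [hrw]
    exact Ideal.sum_mem _ fun d _ => monomial_sub_tRed_mem d _
  · intro d hd
    by_contra hlt
    apply mem_support_iff.mp hd
    rw [coeff_sum]
    refine Finset.sum_eq_zero fun e _ => ?_
    rw [coeff_monomial, if_neg]
    intro hc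
    apply hlt
    have := tRed_three e
    rw [hc] at this
    omega

lemma toricIdeal_le_ker : toricIdeal ≤ RingHom.ker tPhi := by
  rw [toricIdeal, Ideal.span_le, Set.singleton_subset_iff]
  simp only [SetLike.mem_coe, RingHom.mem_ker]
  show tPhi (X 0 * X 1 * X 2 - X 3 ^ 5) = 0
  simp only [tPhi, map_sub, map_mul, map_pow, aeval_X, tGen,
    Matrix.cons_val_zero, Matrix.cons_val_one, Matrix.head_cons,
    Matrix.cons_val_two, Matrix.tail_cons, Matrix.cons_val_three]
  ring

lemma ker_le_toricIdeal : RingHom.ker tPhi ≤ toricIdeal := by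
  intro p hp
  obtain ⟨q, hpq, hred⟩ := tReduce_exists p
  have hp0 : tPhi p = 0 := hp
  have hq0 : tPhi q = 0 := by
    have h1 : tPhi (p - q) = 0 := toricIdeal_le_ker hpq
    rw [map_sub, hp0, zero_sub, neg_eq_zero] at h1
    exact h1
  have hqz : q = 0 := by
    by_contra h
    obtain ⟨d, hd⟩ := Finset.nonempty_iff_ne_empty.mpr
      (fun hs => h (support_eq_empty.mp hs))
    have hd5 := hred d hd
    have hkey : coeff (tEmb d) (tPhi q) = coeff d q := by
      conv_lhs => rw [q.as_sum, map_sum]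
      simp only [tPhi_monomial]
      rw [coeff_sum, Finset.sum_eq_single d]
      · rw [coeff_monomial, if_pos rfl]
      · intro e hes hne
        rw [coeff_monomial, if_neg]
        exact fun hc => hne (tEmb_injOn (hred e hes) hd5 hc)
      · intro hds
        exact absurd hd hds
    rw [hq0, coeff_zero] at hkey
    exact mem_support_iff.mp hd hkey.symm
  have hpq' := hpq
  rw [hqz, sub_zero] at hpq'
  exact hpq'

lemma tPhi_range : tPhi.range = invariantAlgebra := by
  rw [tPhi, ← Algebra.adjoin_range_eq_range_aeval, invariantAlgebra]
  congr 1
  rw [tGen]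
  simp only [Matrix.range_cons, Matrix.range_empty, Set.union_empty]
  ext x
  simp only [Set.mem_union, Set.mem_singleton_iff, Set.mem_insert_iff]
  try tauto

/-- `tPhi` corestricted to its image. -/
noncomputable def tPhi' : MvPolynomial (Fin 4) ℂ →ₐ[ℂ] invariantAlgebra :=
  tPhi.codRestrict invariantAlgebra (fun x => tPhi_range ▸ ⟨x, rfl⟩)

lemma tPhi'_surj : Function.Surjective tPhi' := by
  rintro ⟨y, hy⟩
  rw [← tPhi_range] at hy
  obtain ⟨x, hx⟩ := hy
  exact ⟨x, Subtype.ext hx⟩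

lemma tPhi'_ker : RingHom.ker tPhi' = toricIdeal := by
  ext x
  rw [RingHom.mem_ker]
  constructor
  · intro h
    apply ker_le_toricIdeal
    rw [RingHom.mem_ker]
    have := congrArg (Subtype.val) h
    simpa [tPhi'] using this
  · intro h
    have : tPhi x = 0 := toricIdeal_le_ker h
    apply Subtype.ext
    simpa [tPhi'] using this

/-- The `ℂ`-subalgebra `ℂ[u⁵, v⁵, w⁵, uvw] ⊆ ℂ[u,v,w]` is isomorphic as a
`ℂ`-algebra to `ℂ[x,y,z,t]/(xyz − t⁵)`, via an isomorphism sending `x ↦ u⁵`, `y ↦ v⁵`,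
`z ↦ w⁵`, `t ↦ uvw`. -/
theorem invariant_algebra_iso_toric_hypersurface :
    ∃ e : (MvPolynomial (Fin 4) ℂ ⧸ toricIdeal) ≃ₐ[ℂ] invariantAlgebra,
      ((e (Ideal.Quotient.mk toricIdeal (X 0)) : MvPolynomial (Fin 3) ℂ) = X 0 ^ 5) ∧
      ((e (Ideal.Quotient.mk toricIdeal (X 1)) : MvPolynomial (Fin 3) ℂ) = X 1 ^ 5) ∧
      ((e (Ideal.Quotient.mk toricIdeal (X 2)) : MvPolynomial (Fin 3) ℂ) = X 2 ^ 5) ∧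
      ((e (Ideal.Quotient.mk toricIdeal (X 3)) : MvPolynomial (Fin 3) ℂ) =
        X 0 * X 1 * X 2) := by
  refine ⟨(Ideal.quotientEquivAlgOfEq ℂ tPhi'_ker.symm).trans
    (Ideal.quotientKerAlgEquivOfSurjective tPhi'_surj), ?_, ?_, ?_, ?_⟩ <;>
  · rw [AlgEquiv.trans_apply, Ideal.quotientEquivAlgOfEq_mk,
      Ideal.quotientKerAlgEquivOfSurjective_mk]
    simp [tPhi', tPhi, tGen, AlgHom.coe_codRestrict]
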